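/- Let G be a topological group, let S be a set of automorphisms of G, let H ≤ L ≤ K ≤ G be closed S-invariant subgroups, and let x ∈ K. If the coset xH is an equicontinuous point of the action of S on G/H, then the coset xL is an equicontinuous point of the action of S on K/L. -/

import Mathlib

open Topology Pointwise

/-- Equicontinuous points pass to quotient coset spaces: if `H ≤ L ≤ K ≤ G` are closed
`S`-invariant subgroups and `xH` is an equicontinuous point of the action of `S` on `G/H`,
then `xL` is an equicontinuous point of the action of `S` on `K/L`.  Here the coset space
`M/N` carries the right uniformity with basic entourages `{(aN, bN) : aN ⊆ U b N}` for `U`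
an identity neighbourhood of `M`, and identity neighbourhoods and neighbourhoods of `x`
in the subgroup `K` are realized as intersections with `K` of such neighbourhoods in `G`. -/
theorem equicontinuous_point_quotient {G : Type*} [Group G] [TopologicalSpace G]
    [IsTopologicalGroup G] (S : Set (G ≃* G)) (H L K : Subgroup G)
    (hHL : H ≤ L) (hLK : L ≤ K)
    (hHc : IsClosed (H : Set G)) (hLc : IsClosed (L : Set G)) (hKc : IsClosed (K : Set G))
    (hHinv : ∀ s ∈ S, ⇑s '' (H : Set G) = (H : Set G))
    (hLinv : ∀ s ∈ S, ⇑s '' (L : Set G) = (L : Set G))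
    (hKinv : ∀ s ∈ S, ⇑s '' (K : Set G) = (K : Set G))
    (x : G) (hx : x ∈ K)
    (hEq : ∀ U ∈ 𝓝 (1 : G), ∃ V ∈ 𝓝 x, ∀ s ∈ S, ∀ y ∈ V,
      s x ∈ U * ({s y} : Set G) * (H : Set G)) :
    ∀ U ∈ 𝓝 (1 : G), ∃ V ∈ 𝓝 x, ∀ s ∈ S, ∀ y ∈ V ∩ (K : Set G),
      s x ∈ (U ∩ (K : Set G)) * ({s y} : Set G) * (L : Set G) := by
  intro U hU
  obtain ⟨V, hV, hVs⟩ := hEq U hU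
  refine ⟨V, hV, fun s hs y hy => ?_⟩
  obtain ⟨hyV, hyK⟩ := hy
  obtain ⟨a, ha, h, hh, hah⟩ := hVs s hs y hyV
  obtain ⟨u, hu, z, hz, huz⟩ := ha
  rw [Set.mem_singleton_iff] at hz
  subst hz
  have hsx : s x ∈ K := by show s x ∈ (K : Set G); rw [← hKinv s hs]; exact ⟨x, hx, rfl⟩
  have hsy : s y ∈ K := by show s y ∈ (K : Set G); rw [← hKinv s hs]; exact ⟨y, hyK, rfl⟩
  have huK : u ∈ K := by
    have he : u = s x * h⁻¹ * (s y)⁻¹ := by rw [← hah, ← huz]; group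
    rw [he]
    exact K.mul_mem (K.mul_mem hsx (K.inv_mem (hLK (hHL hh)))) (K.inv_mem hsy)
  exact ⟨u * s y, ⟨u, ⟨hu, huK⟩, s y, rfl, rfl⟩, h, hHL hh, by rw [← hah, ← huz]⟩
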